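/- Let s < t be real numbers, let g : [s,t] → ℝ be continuously differentiable with g ≥ 0, and let f : [s,t] → ℝ be monotone increasing (nondecreasing) with f ≥ 0. Assume there exists an open set U ⊆ (s,t) whose complement in (s,t) has Lebesgue measure zero, such that f is locally constant on U. Then g(t)·f(t) − g(s)·f(s) − ∫ₛᵗ g'(σ)·f(σ) dσ ≥ 0. -/

import Mathlib

open MeasureTheory

/-- **Singular part estimate in the product-monotonicity lemma.**  Let `s < t`,
`g : [s,t] → ℝ` continuously differentiable with derivative `g'` and `g ≥ 0`, and
`f : [s,t] → ℝ` monotone increasing with `f ≥ 0`.  Suppose there is an open set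
`U ⊆ (s,t)` of full measure in `(s,t)` on which `f` is locally constant.  Then
`g(t)·f(t) − g(s)·f(s) − ∫ₛᵗ g'(σ)·f(σ) dσ ≥ 0`. -/
theorem stmt17 (s t : ℝ) (hst : s < t) (g g' f : ℝ → ℝ)
    (hg' : ∀ σ ∈ Set.Icc s t, HasDerivWithinAt g (g' σ) (Set.Icc s t) σ)
    (hg'cont : ContinuousOn g' (Set.Icc s t))
    (hg_nonneg : ∀ σ ∈ Set.Icc s t, 0 ≤ g σ)
    (hf_mono : MonotoneOn f (Set.Icc s t))
    (hf_nonneg : ∀ σ ∈ Set.Icc s t, 0 ≤ f σ)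
    (U : Set ℝ) (hU_open : IsOpen U) (hU_sub : U ⊆ Set.Ioo s t)
    (hU_full : volume (Set.Ioo s t \ U) = 0)
    (hf_locconst : ∀ x ∈ U, ∀ᶠ y in nhds x, f y = f x) :
    0 ≤ g t * f t - g s * f s - ∫ σ in s..t, g' σ * f σ := by
  -- Bound M for |g'| on [s,t]
  obtain ⟨M, hM⟩ := (isCompact_Icc (a := s) (b := t)).exists_bound_of_continuousOn hg'cont
  have hM0 : 0 ≤ M := le_trans (norm_nonneg _) (hM s ⟨le_rfl, hst.le⟩)
  -- interval integrability of g' * f on subintervals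
  have hInt : ∀ x y : ℝ, s ≤ x → x ≤ y → y ≤ t →
      IntervalIntegrable (fun σ => g' σ * f σ) volume x y := by
    intro x y hsx hxy hyt
    have hsub : Set.uIcc x y ⊆ Set.Icc s t := by
      rw [Set.uIcc_of_le hxy]
      exact Set.Icc_subset_Icc hsx hyt
    exact ((hf_mono.mono hsub).intervalIntegrable).continuousOn_mul
      (hg'cont.mono hsub)
  have hIntg' : ∀ x y : ℝ, s ≤ x → x ≤ y → y ≤ t →
      IntervalIntegrable g' volume x y := by
    intro x y hsx hxy hyt
    have hsub : Set.uIcc x y ⊆ Set.Icc s t := by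
      rw [Set.uIcc_of_le hxy]
      exact Set.Icc_subset_Icc hsx hyt
    exact (hg'cont.mono hsub).intervalIntegrable
  have hgcont : ContinuousOn g (Set.Icc s t) :=
    fun x hx => (hg' x hx).continuousWithinAt
  -- FTC on subintervals
  have hFTC : ∀ x y : ℝ, s ≤ x → x ≤ y → y ≤ t →
      (∫ σ in x..y, g' σ) = g y - g x := by
    intro x y hsx hxy hyt
    apply intervalIntegral.integral_eq_sub_of_hasDeriv_right_of_le hxy
      (hgcont.mono (Set.Icc_subset_Icc hsx hyt))
      (fun z hz => ?_) (hIntg' x y hsx hxy hyt)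
    have hz' : z ∈ Set.Ioo s t := ⟨lt_of_le_of_lt hsx hz.1, lt_of_lt_of_le hz.2 hyt⟩
    exact (hg' z (Set.Ioo_subset_Icc_self hz')).mono_of_mem_nhdsWithin
      (mem_nhdsWithin_of_mem_nhds (Icc_mem_nhds hz'.1 hz'.2))
  -- key estimate on a subinterval
  have keyA : ∀ x y : ℝ, s ≤ x → x ≤ y → y ≤ t →
      -(M * ((y - x) * (f y - f x))) ≤
        g y * f y - g x * f x - ∫ σ in x..y, g' σ * f σ := by
    intro x y hsx hxy hyt
    have hxI : x ∈ Set.Icc s t := ⟨hsx, hxy.trans hyt⟩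
    have hyI : y ∈ Set.Icc s t := ⟨hsx.trans hxy, hyt⟩
    have hf_le : f x ≤ f y := hf_mono hxI hyI hxy
    have hdecomp : g y * f y - g x * f x - (∫ σ in x..y, g' σ * f σ) =
        g y * (f y - f x) + ∫ σ in x..y, g' σ * (f x - f σ) := by
      have h1 : (∫ σ in x..y, g' σ * (f x - f σ)) =
          (∫ σ in x..y, g' σ * f x) - ∫ σ in x..y, g' σ * f σ := by
        rw [← intervalIntegral.integral_sub
          ((hIntg' x y hsx hxy hyt).mul_const _) (hInt x y hsx hxy hyt)]
        congr 1; ext σ; ring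
      have h2 : (∫ σ in x..y, g' σ * f x) = (g y - g x) * f x := by
        rw [intervalIntegral.integral_mul_const, hFTC x y hsx hxy hyt]
      rw [h1, h2]; ring
    rw [hdecomp]
    have hbound : ‖∫ σ in x..y, g' σ * (f x - f σ)‖ ≤ M * (f y - f x) * |y - x| := by
      apply intervalIntegral.norm_integral_le_of_norm_le_const
      intro z hz
      rw [Set.uIoc_of_le hxy] at hz
      have hzI : z ∈ Set.Icc s t := ⟨hsx.trans hz.1.le, hz.2.trans hyt⟩
      have h1 : ‖g' z‖ ≤ M := hM z hzI
      have h2 : ‖f x - f z‖ ≤ f y - f x := by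
        rw [Real.norm_eq_abs, abs_sub_comm, abs_of_nonneg
          (sub_nonneg.2 (hf_mono hxI hzI hz.1.le))]
        have := hf_mono hzI hyI hz.2
        linarith
      calc ‖g' z * (f x - f z)‖ = ‖g' z‖ * ‖f x - f z‖ := norm_mul _ _
        _ ≤ M * (f y - f x) :=
          mul_le_mul h1 h2 (norm_nonneg _) hM0
    have hge : -(M * (f y - f x) * |y - x|) ≤ ∫ σ in x..y, g' σ * (f x - f σ) :=
      neg_le_of_abs_le hbound
    have habs : |y - x| = y - x := abs_of_nonneg (sub_nonneg.2 hxy)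
    rw [habs] at hge
    have hgy : 0 ≤ g y * (f y - f x) :=
      mul_nonneg (hg_nonneg y hyI) (sub_nonneg.2 hf_le)
    nlinarith [hge, hgy]
  -- uniform partition estimate
  have hmain : ∀ n : ℕ, 0 < n →
      -(M * (t - s) * (f t - f s)) / n ≤
        g t * f t - g s * f s - ∫ σ in s..t, g' σ * f σ := by
    intro n hn
    set δ : ℝ := (t - s) / n with hδ
    have hn' : (0:ℝ) < n := by exact_mod_cast hn
    have hδpos : 0 < δ := div_pos (sub_pos.2 hst) hn'
    set x : ℕ → ℝ := fun i => s + i * δ with hx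
    have hx0 : x 0 = s := by simp [hx]
    have hxn : x n = t := by
      simp only [hx, hδ]
      field_simp
      ring
    have hxmono : ∀ i j : ℕ, i ≤ j → x i ≤ x j := by
      intro i j hij
      simp only [hx]
      have : (i:ℝ) ≤ j := by exact_mod_cast hij
      nlinarith
    have hxmem : ∀ i ≤ n, s ≤ x i ∧ x i ≤ t := by
      intro i hi
      constructor
      · rw [← hx0]; exact hxmono 0 i (Nat.zero_le _)
      · rw [← hxn]; exact hxmono i n hi
    have hstep : ∀ i : ℕ, x (i + 1) - x i = δ := by
      intro i
      simp only [hx]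
      push_cast
      ring
    -- telescoping
    have hsum1 : ∑ i ∈ Finset.range n, (g (x (i+1)) * f (x (i+1)) - g (x i) * f (x i))
        = g t * f t - g s * f s := by
      rw [Finset.sum_range_sub (fun i => g (x i) * f (x i)), hx0, hxn]
    have hsum2 : ∑ i ∈ Finset.range n, (∫ σ in x i..x (i+1), g' σ * f σ)
        = ∫ σ in s..t, g' σ * f σ := by
      rw [intervalIntegral.sum_integral_adjacent_intervals (fun k hk => ?_), hx0, hxn]
      exact hInt _ _ (hxmem k hk.le).1 (hxmono k (k+1) (Nat.le_succ _))
        (hxmem (k+1) hk).2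
    have hsum3 : ∑ i ∈ Finset.range n, (f (x (i+1)) - f (x i)) = f t - f s := by
      rw [Finset.sum_range_sub (fun i => f (x i)), hx0, hxn]
    have hterm : ∀ i ∈ Finset.range n,
        -(M * δ * (f (x (i+1)) - f (x i))) ≤
          g (x (i+1)) * f (x (i+1)) - g (x i) * f (x i)
            - ∫ σ in x i..x (i+1), g' σ * f σ := by
      intro i hi
      rw [Finset.mem_range] at hi
      have h := keyA (x i) (x (i+1)) (hxmem i hi.le).1
        (hxmono i (i+1) (Nat.le_succ _)) (hxmem (i+1) hi).2
      rw [hstep i] at h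
      calc -(M * δ * (f (x (i+1)) - f (x i)))
          = -(M * (δ * (f (x (i+1)) - f (x i)))) := by ring
        _ ≤ _ := h
    calc -(M * (t - s) * (f t - f s)) / n
        = ∑ i ∈ Finset.range n, -(M * δ * (f (x (i+1)) - f (x i))) := by
          rw [Finset.sum_neg_distrib, ← Finset.mul_sum, hsum3]
          simp only [hδ]
          field_simp
      _ ≤ ∑ i ∈ Finset.range n, (g (x (i+1)) * f (x (i+1)) - g (x i) * f (x i)
            - ∫ σ in x i..x (i+1), g' σ * f σ) := Finset.sum_le_sum hterm
      _ = g t * f t - g s * f s - ∫ σ in s..t, g' σ * f σ := by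
          rw [Finset.sum_sub_distrib, hsum1, hsum2]
  -- pass to the limit n → ∞
  have htend : Filter.Tendsto (fun n : ℕ => -(M * (t - s) * (f t - f s)) / n)
      Filter.atTop (nhds 0) := tendsto_const_div_atTop_nhds_zero_nat _
  refine le_of_tendsto htend ?_
  filter_upwards [Filter.eventually_gt_atTop 0] with n hn
  exact hmain n hn
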